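/- Let N ≥ 2 be an integer and m > 1, and set σ_c = 2(N−1)(m−1)/(3m+1). There exists σ1 ≥ σ_c (depending only on m and N) such that for every σ > σ1 there exists no good profile with interface for the profile ODE. -/

import Mathlib

open Set Filter Topology

/-- One-sided derivative (on `[0,∞)`) of the `m`-th power of the profile. -/
noncomputable def Dm (m : ℝ) (f : ℝ → ℝ) : ℝ → ℝ :=
  derivWithin (fun ξ => f ξ ^ m) (Ici 0)

/-- Second one-sided derivative (on `[0,∞)`) of the `m`-th power of the profile. -/
noncomputable def D2m (m : ℝ) (f : ℝ → ℝ) : ℝ → ℝ :=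
  derivWithin (Dm m f) (Ici 0)

/-- A good profile for the ODE
`(f^m)'' + ((N-1)/ξ)(f^m)' - f/(m-1) + ξ^σ f^m = 0`:
a continuous nonnegative function on `[0,∞)` whose `m`-th power is twice
differentiable, solving the ODE wherever `f > 0`, and satisfying one of the
initial behaviors (P1), (P2), (P3). -/
structure GoodProfile (m σ N : ℝ) (f : ℝ → ℝ) : Prop where
  cont : ContinuousOn f (Ici 0)
  nonneg : ∀ ξ, 0 ≤ ξ → 0 ≤ f ξ
  diff1 : ∀ ξ, 0 ≤ ξ → DifferentiableWithinAt ℝ (fun ξ => f ξ ^ m) (Ici 0) ξ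
  diff2 : ∀ ξ, 0 ≤ ξ → DifferentiableWithinAt ℝ (Dm m f) (Ici 0) ξ
  ode : ∀ ξ, 0 < ξ → 0 < f ξ →
    D2m m f ξ + ((N - 1) / ξ) * Dm m f ξ - f ξ / (m - 1) + ξ ^ σ * f ξ ^ m = 0
  init : (0 < f 0 ∧ HasDerivWithinAt f 0 (Ici 0) 0)
    ∨ (f 0 = 0 ∧ Dm m f 0 = 0)
    ∨ (∃ ξ0 > (0:ℝ), f ξ0 = 0 ∧ Dm m f ξ0 = 0 ∧
        ∃ ε > (0:ℝ), ∀ ξ ∈ Ioo ξ0 (ξ0 + ε), 0 < f ξ)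

/-- A good profile has an interface at `η ∈ (0,∞)` if `f(η) = 0`, `(f^m)'(η) = 0`
and `f > 0` on a left-neighborhood of `η`. -/
def HasInterfaceAt (m : ℝ) (f : ℝ → ℝ) (η : ℝ) : Prop :=
  0 < η ∧ f η = 0 ∧ Dm m f η = 0 ∧ ∃ ε > (0:ℝ), ∀ ξ ∈ Ioo (η - ε) η, 0 < f ξ

set_option maxHeartbeats 1000000 in
/-- Theorem 1.5: for `N ≥ 2`, `m > 1`, there exists
`σ1 ≥ σ_c` (depending only on `m` and `N`) such that for every `σ > σ1` there
is no good profile with interface. -/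
theorem no_goodProfile_with_interface_for_large_sigma
    (N : ℕ) (hN : 2 ≤ N) (m : ℝ) (hm : 1 < m) :
    ∃ σ1 : ℝ, 2 * ((N : ℝ) - 1) * (m - 1) / (3 * m + 1) ≤ σ1 ∧
      ∀ σ : ℝ, σ1 < σ →
        ¬ ∃ f η, GoodProfile m σ (N : ℝ) f ∧ HasInterfaceAt m f η := by
  obtain ⟨k, rfl⟩ : ∃ k : ℕ, N = k + 2 := ⟨N - 2, by omega⟩
  have hm0 : (0:ℝ) < m - 1 := by linarith
  have hmp : (0:ℝ) < m + 1 := by linarith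
  have hme : m ≠ 0 := by linarith
  set n : ℝ := (k : ℝ) + 2 with hn
  have hn0 : (0:ℝ) < n := by positivity
  have hkc : ((k + 2 : ℕ) : ℝ) = n := by push_cast [hn]; ring
  refine ⟨n * (m - 1) / (m + 1), ?_, ?_⟩
  · rw [div_le_div_iff₀ (by linarith) hmp, hkc]
    nlinarith [hn0.le, hm0.le, mul_nonneg hn0.le hm0.le]
  · rintro σ hσ ⟨f, η, hf, hη0, hfη, hDη, ε, hε, hpos⟩
    have hσ0 : 0 < σ := lt_of_le_of_lt (by positivity) hσ
    set g : ℝ → ℝ := fun x => f x ^ m with hg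
    set g1 : ℝ → ℝ := Dm m f with hg1
    have hmem : ∀ {x : ℝ}, 0 < x → Ici (0:ℝ) ∈ 𝓝 x := fun {x} hx =>
      Filter.mem_of_superset (Ioi_mem_nhds hx) Ioi_subset_Ici_self
    have hgderiv : ∀ {x : ℝ}, 0 < x → HasDerivAt g (g1 x) x := by
      intro x hx
      have hd := (hf.diff1 x hx.le).differentiableAt (hmem hx)
      have he : g1 x = deriv g x := derivWithin_of_mem_nhds (hmem hx)
      rw [he]; exact hd.hasDerivAt
    have hg1deriv : ∀ {x : ℝ}, 0 < x → HasDerivAt g1 (D2m m f x) x := by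
      intro x hx
      have hd := (hf.diff2 x hx.le).differentiableAt (hmem hx)
      have he : D2m m f x = deriv g1 x := derivWithin_of_mem_nhds (hmem hx)
      rw [he]; exact hd.hasDerivAt
    -- the set of zeroes of `f` below the interface
    set b : ℝ := max (η - ε) 0 with hb
    have hbη : b < η := max_lt (by linarith) hη0
    have hb0 : 0 ≤ b := le_max_right _ _
    set Z : Set ℝ := {x ∈ Icc 0 b | f x = 0} with hZ
    have hZsub : ∀ x, 0 ≤ x → x < η → f x = 0 → x ∈ Z := by
      intro x hx0 hxη hfx
      refine ⟨⟨hx0, ?_⟩, hfx⟩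
      by_contra hxb
      push_neg at hxb
      exact absurd hfx (ne_of_gt (hpos x ⟨lt_of_le_of_lt (le_max_left _ _) hxb, hxη⟩))
    have hZclosed : IsClosed Z := by
      have hZ' : Z = Icc 0 b ∩ f ⁻¹' {0} := by
        ext x
        simp [hZ, Set.mem_sep_iff, Set.mem_inter_iff, Set.mem_preimage, and_comm]
      rw [hZ']
      exact (hf.cont.mono Icc_subset_Ici_self).preimage_isClosed_of_isClosed
        isClosed_Icc isClosed_singleton
    set a : ℝ := sSup Z with ha
    have ha0 : 0 ≤ a := Real.sSup_nonneg (fun x hx => hx.1.1)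
    have haη : a < η := lt_of_le_of_lt (Real.sSup_le (fun x hx => hx.1.2) hb0) hbη
    have hbdd : BddAbove Z := ⟨b, fun x hx => hx.1.2⟩
    have hposa : ∀ x, a < x → x < η → 0 < f x := by
      intro x hx hxη
      have hx0 : 0 ≤ x := le_trans ha0 hx.le
      rcases lt_or_eq_of_le (hf.nonneg x hx0) with h | h
      · exact h
      · exact absurd (le_csSup hbdd (hZsub x hx0 hxη h.symm)) (not_le.mpr hx)
    set p : ℝ := (m + 1) / m with hp
    have hppos : 0 < p := by positivity
    set C2 : ℝ := m / ((m + 1) * (m - 1)) with hC2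
    set β : ℝ := (σ + n) / 2 with hβ
    set B : ℝ → ℝ := fun x => x ^ (k + 2) * (g1 x * g1 x) / 2
      + β * (x ^ (k + 1) * (g x * g1 x))
      - C2 * (x ^ (k + 2) * g x ^ p)
      + x ^ σ * x ^ (k + 2) * (g x * g x) / 2 with hB
    -- B vanishes at the left endpoint a
    have hBa : B a = 0 := by
      rcases eq_or_lt_of_le ha0 with h0 | hapos
      · rw [hB]
        simp only [← h0]
        rw [Real.zero_rpow hσ0.ne']
        simp [zero_pow]
      · have hZne : Z.Nonempty := by
          by_contra hne
          rw [Set.not_nonempty_iff_eq_empty] at hne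
          rw [ha, hne, Real.sSup_empty] at hapos
          exact lt_irrefl _ hapos
        have hZcpt : IsCompact Z :=
          (isCompact_Icc (a := (0:ℝ)) (b := b)).of_isClosed_subset hZclosed
            (fun x hx => hx.1)
        have haZ : a ∈ Z := hZcpt.sSup_mem hZne
        have hfa : f a = 0 := haZ.2
        have hga : g a = 0 := by rw [hg]; simp only [hfa]; exact Real.zero_rpow hme
        have hmin : IsLocalMin g a := by
          refine Filter.eventually_of_mem (Ioi_mem_nhds hapos) (fun x hx => ?_)
          rw [hga]
          exact Real.rpow_nonneg (hf.nonneg x (le_of_lt hx)) m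
        have hda : DifferentiableAt ℝ g a :=
          (hf.diff1 a ha0).differentiableAt (hmem hapos)
        have hg1a : g1 a = 0 := by
          have he : g1 a = deriv g a := derivWithin_of_mem_nhds (hmem hapos)
          rw [he]; exact hmin.deriv_eq_zero
        rw [hB]
        simp only [hga, hg1a, Real.zero_rpow hppos.ne']
        ring
    -- B vanishes at the interface
    have hgη : g η = 0 := by rw [hg]; simp only [hfη]; exact Real.zero_rpow hme
    have hg1η : g1 η = 0 := hDη
    have hBη : B η = 0 := by
      rw [hB]
      simp only [hgη, hg1η, Real.zero_rpow hppos.ne']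
      ring
    -- continuity of B on [a, η]
    have hIcc : Icc a η ⊆ Ici 0 := fun x hx => le_trans ha0 hx.1
    have hgc : ContinuousOn g (Icc a η) := fun x hx =>
      ((hf.diff1 x (hIcc hx)).continuousWithinAt).mono hIcc
    have hg1c : ContinuousOn g1 (Icc a η) := fun x hx =>
      ((hf.diff2 x (hIcc hx)).continuousWithinAt).mono hIcc
    have hxσc : ContinuousOn (fun x : ℝ => x ^ σ) (Icc a η) :=
      continuousOn_id.rpow_const (fun x _ => Or.inr hσ0.le)
    have hBc : ContinuousOn B (Icc a η) := by
      have c1 : ContinuousOn (fun x : ℝ => x ^ (k + 2) * (g1 x * g1 x) / 2) (Icc a η) :=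
        ((continuous_pow (k + 2)).continuousOn.mul (hg1c.mul hg1c)).div_const 2
      have c2 : ContinuousOn (fun x : ℝ => β * (x ^ (k + 1) * (g x * g1 x))) (Icc a η) :=
        continuousOn_const.mul ((continuous_pow (k + 1)).continuousOn.mul (hgc.mul hg1c))
      have c3 : ContinuousOn (fun x : ℝ => C2 * (x ^ (k + 2) * g x ^ p)) (Icc a η) :=
        continuousOn_const.mul ((continuous_pow (k + 2)).continuousOn.mul
          (hgc.rpow_const (fun x _ => Or.inr hppos.le)))
      have c4 : ContinuousOn (fun x : ℝ => x ^ σ * x ^ (k + 2) * (g x * g x) / 2) (Icc a η) :=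
        ((hxσc.mul (continuous_pow (k + 2)).continuousOn).mul (hgc.mul hgc)).div_const 2
      rw [hB]
      exact ((c1.add c2).sub c3).add c4
    -- positivity of the derivative of B on (a, η)
    have hderiv : ∀ x ∈ Ioo a η, 0 < deriv B x := by
      intro x hx
      have hx0 : 0 < x := lt_of_le_of_lt ha0 hx.1
      have hfx : 0 < f x := hposa x hx.1 hx.2
      have hgx : 0 < g x := Real.rpow_pos_of_pos hfx m
      have hU : HasDerivAt g (g1 x) x := hgderiv hx0
      have hV : HasDerivAt g1 (D2m m f x) x := hg1deriv hx0
      set U : ℝ := g1 x with hUdef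
      set V : ℝ := D2m m f x with hVdef
      have hVeq : V = f x / (m - 1) - x ^ σ * g x - ((n - 1) / x) * U := by
        have hode := hf.ode x hx0 hfx
        have hgx' : f x ^ m = g x := rfl
        rw [hgx', hkc] at hode
        rw [hVdef, hUdef, hg1]
        linarith [hode]
      have hpw2 : HasDerivAt (fun y : ℝ => y ^ (k + 2))
          (((k + 2 : ℕ) : ℝ) * x ^ (k + 1)) x := hasDerivAt_pow (k + 2) x
      have hpw1 : HasDerivAt (fun y : ℝ => y ^ (k + 1))
          (((k + 1 : ℕ) : ℝ) * x ^ k) x := hasDerivAt_pow (k + 1) x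
      have hσd : HasDerivAt (fun y : ℝ => y ^ σ) (σ * x ^ (σ - 1)) x :=
        Real.hasDerivAt_rpow_const (Or.inl hx0.ne')
      have hgp : HasDerivAt (fun y => g y ^ p) ((p * g x ^ (p - 1)) * U) x :=
        (Real.hasDerivAt_rpow_const (Or.inl hgx.ne')).comp x hU
      have hBB : HasDerivAt B
          ((((k + 2 : ℕ) : ℝ) * x ^ (k + 1) * (U * U) + x ^ (k + 2) * (V * U + U * V)) / 2
           + β * (((k + 1 : ℕ) : ℝ) * x ^ k * (g x * U) + x ^ (k + 1) * (U * U + g x * V))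
           - C2 * (((k + 2 : ℕ) : ℝ) * x ^ (k + 1) * g x ^ p
                + x ^ (k + 2) * ((p * g x ^ (p - 1)) * U))
           + ((σ * x ^ (σ - 1) * x ^ (k + 2) + x ^ σ * (((k + 2 : ℕ) : ℝ) * x ^ (k + 1)))
                * (g x * g x) + x ^ σ * x ^ (k + 2) * (U * g x + g x * U)) / 2) x := by
        rw [hB]
        exact ((((hpw2.mul (hV.mul hV)).div_const 2).add
            ((hpw1.mul (hU.mul hV)).const_mul β)).sub
            ((hpw2.mul hgp).const_mul C2)).add
            (((hσd.mul hpw2).mul (hU.mul hU)).div_const 2)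
      have hfx0 : (0:ℝ) ≤ f x := hfx.le
      have hg1m : g x ^ (1 / m) = f x := by
        rw [hg]
        show (f x ^ m) ^ (1 / m) = f x
        rw [← Real.rpow_mul hfx0, mul_one_div_cancel hme, Real.rpow_one]
      have hgp1 : g x ^ (p - 1) = f x := by
        have hp1 : p - 1 = 1 / m := by rw [hp]; field_simp; ring
        rw [hp1, hg1m]
      have hgpp : g x ^ p = g x * f x := by
        have hp2 : p = 1 + 1 / m := by rw [hp]; field_simp
        rw [hp2, Real.rpow_add hgx, Real.rpow_one, hg1m]
      have hxσ1 : x ^ (σ - 1) = x ^ σ / x := Real.rpow_sub_one hx0.ne' σ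
      have hcoef : 0 < (1 / (m - 1)) * ((σ + n) / 2 - m * n / (m + 1)) := by
        rw [hn, div_lt_iff₀ hmp] at hσ
        have h2 : m * n / (m + 1) < (σ + n) / 2 := by
          rw [div_lt_div_iff₀ hmp two_pos, hn]
          nlinarith [hσ]
        have := sub_pos.mpr h2
        positivity
      have hkey : deriv B x
          = (σ / 2 + 1) * (x ^ (k + 1) * (U * U))
            + (1 / (m - 1)) * ((σ + n) / 2 - m * n / (m + 1))
              * (x ^ (k + 1) * (g x * f x)) := by
        rw [hBB.deriv, hVeq, hgp1, hgpp, hxσ1, hβ, hC2, hp, hn]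
        push_cast
        simp only [pow_succ]
        generalize x ^ k = W
        generalize x ^ σ = X
        generalize g x = G
        generalize f x = F
        field_simp
        ring
      rw [hkey]
      have h1 : 0 ≤ (σ / 2 + 1) * (x ^ (k + 1) * (U * U)) :=
        mul_nonneg (by linarith) (mul_nonneg (pow_nonneg hx0.le _) (mul_self_nonneg U))
      have h2 : 0 < (1 / (m - 1)) * ((σ + n) / 2 - m * n / (m + 1))
          * (x ^ (k + 1) * (g x * f x)) := by
        exact mul_pos hcoef (mul_pos (pow_pos hx0 _) (mul_pos hgx hfx))
      linarith
    -- strict monotonicity of B gives the contradiction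
    have hmono : StrictMonoOn B (Icc a η) := by
      refine strictMonoOn_of_deriv_pos (convex_Icc a η) hBc (fun x hx => ?_)
      rw [interior_Icc] at hx
      exact hderiv x hx
    have hlt : B a < B η :=
      hmono (left_mem_Icc.mpr haη.le) (right_mem_Icc.mpr haη.le) haη
    rw [hBa, hBη] at hlt
    exact lt_irrefl 0 hlt
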